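/- If π is a probability measure on ℝ₊ⁿ with E_π[(xᵢ − Kᵢ)₊] = pᵢ for given Kᵢ ≥ 0 and all i, then for any w ∈ ℝ₊ⁿ with strike K₀ ≥ 0, E_π[(wᵀx − K₀)₊] ≤ wᵀp + (wᵀK − K₀)₊. -/

import Mathlib

open MeasureTheory Filter

theorem upper_bound_no_forward {n : ℕ} (π : Measure (Fin n → ℝ))
    [IsProbabilityMeasure π] (w K p : Fin n → ℝ) (K0 : ℝ)
    (hw : ∀ i, 0 ≤ w i) (hK : ∀ i, 0 ≤ K i) (hK0 : 0 ≤ K0)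
    (hsupp : ∀ᵐ x ∂π, ∀ i, 0 ≤ x i)
    (hintK : ∀ i, Integrable (fun x => max (x i - K i) 0) π)
    (hintC : Integrable (fun x => max (∑ i, w i * x i - K0) 0) π)
    (hp : ∀ i, ∫ x, max (x i - K i) 0 ∂π = p i) :
    ∫ x, max (∑ i, w i * x i - K0) 0 ∂π ≤
      ∑ i, w i * p i + max (∑ i, w i * K i - K0) 0 := by
  have hintS : Integrable (fun x => (∑ i, w i * max (x i - K i) 0) +
      max (∑ i, w i * K i - K0) 0) π := by
    apply Integrable.add _ (integrable_const _)
    exact integrable_finset_sum _ fun i _ => (hintK i).const_mul (w i)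
  have hle : ∫ x, max (∑ i, w i * x i - K0) 0 ∂π ≤
      ∫ x, ((∑ i, w i * max (x i - K i) 0) + max (∑ i, w i * K i - K0) 0) ∂π := by
    apply integral_mono_ae hintC hintS
    filter_upwards [hsupp] with x hx
    have h1 : ∑ i, w i * x i - K0 ≤
        (∑ i, w i * max (x i - K i) 0) + max (∑ i, w i * K i - K0) 0 := by
      have : ∑ i, w i * x i - K0 =
          (∑ i, w i * (x i - K i)) + (∑ i, w i * K i - K0) := by
        rw [Finset.sum_congr rfl (fun i _ => mul_sub (w i) (x i) (K i)),
          Finset.sum_sub_distrib]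
        ring
      rw [this]
      gcongr with i
      · exact hw i
      · exact le_max_left _ _
      · exact le_max_left _ _
    have h2 : (0:ℝ) ≤ (∑ i, w i * max (x i - K i) 0) + max (∑ i, w i * K i - K0) 0 :=
      add_nonneg (Finset.sum_nonneg fun i _ =>
        mul_nonneg (hw i) (le_max_right _ _)) (le_max_right _ _)
    exact max_le h1 h2
  refine hle.trans_eq ?_
  rw [integral_add (integrable_finset_sum _ fun i _ => (hintK i).const_mul (w i))
    (integrable_const _), integral_const, integral_finset_sum _
    (fun i _ => (hintK i).const_mul (w i))]
  simp only [measure_univ, probReal_univ, ENNReal.toReal_one, one_smul, smul_eq_mul, one_mul]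
  congr 1
  exact Finset.sum_congr rfl fun i _ => by rw [integral_const_mul, hp i]
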